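/- Term abstraction preserves equational equality for exportable terms: if M and N are terms of type Export under policy F (i.e., built from key-free terms by substituting capabilities cert(F,j,op) for dishonest users j), then M = N in the equational theory if and only if η₃(M) = η₃(N), where η₃ renames both authentication keys K_MD and K'_M to a single fresh key K?. (Simplified version over a free term algebra: let terms be elements of a free algebra over constants including K_MD, K'_M, K?; define M : Export if every occurrence of K_MD or K'_M in M occurs as the key argument of a subterm mac(⟨j,op⟩,k) with j dishonest and k = cert-key determined by the policy as a function of (j,op); then the key-collapsing substitution η₃ is injective on Export terms.) -/
import Mathlib


/-- Free term algebra with pairing, MACs, variables, user/operation/name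
constants, and the keys K_MD, K'_M, K?. -/
inductive Tm where
  | KMD : Tm
  | KM : Tm
  | Kq : Tm
  | var : ℕ → Tm
  | user : ℕ → Tm
  | opc : ℕ → Tm
  | name : ℕ → Tm
  | pair : Tm → Tm → Tm
  | mac : Tm → Tm → Tm
deriving DecidableEq

/-- A term is key-free if it contains none of K_MD, K'_M, K?. -/
def Tm.keyFree : Tm → Prop
  | .KMD => False
  | .KM => False
  | .Kq => False
  | .pair a b => a.keyFree ∧ b.keyFree
  | .mac a b => a.keyFree ∧ b.keyFree
  | _ => True

/-- Substitution on the free term algebra. -/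
def Tm.subst (σ : ℕ → Tm) : Tm → Tm
  | .var x => σ x
  | .pair a b => .pair (a.subst σ) (b.subst σ)
  | .mac a b => .mac (a.subst σ) (b.subst σ)
  | t => t

/-- The key-collapsing renaming η₃, replacing K_MD and K'_M by K?. -/
def Tm.eta3 : Tm → Tm
  | .KMD => .Kq
  | .KM => .Kq
  | .pair a b => .pair a.eta3 b.eta3
  | .mac a b => .mac a.eta3 b.eta3
  | t => t

/-- A term is Export (w.r.t. a policy F) if it is obtained from a key-free term
by substituting capabilities `mac(⟨j,op⟩, certkey F j op)` for dishonest
users j. -/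
def ExportTm {Policy : Type*} (certkey : Policy → ℕ → ℕ → Tm)
    (dishonest : ℕ → Prop) (F : Policy) (M : Tm) : Prop :=
  ∃ M' : Tm, ∃ σ : ℕ → Tm, M'.keyFree ∧
    (∀ x, ∃ j o, dishonest j ∧
      σ x = Tm.mac (Tm.pair (Tm.user j) (Tm.opc o)) (certkey F j o)) ∧
    M = M'.subst σ

/-- Auxiliary: a term is "good" w.r.t. a cert-key assignment if it contains
no key except as the key argument of a capability mac. -/
def Good (ck : ℕ → ℕ → Tm) : Tm → Prop
  | .KMD => False
  | .KM => False
  | .Kq => False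
  | .pair a b => Good ck a ∧ Good ck b
  | .mac a b => (Good ck a ∧ Good ck b) ∨
      (∃ j o, a = Tm.pair (Tm.user j) (Tm.opc o) ∧ b = ck j o ∧
        (b = Tm.KMD ∨ b = Tm.KM))
  | _ => True

lemma good_of_keyFree_subst (ck : ℕ → ℕ → Tm) (σ : ℕ → Tm)
    (hσ : ∀ x, ∃ j o, σ x = Tm.mac (Tm.pair (Tm.user j) (Tm.opc o)) (ck j o))
    (hck : ∀ j o, ck j o = Tm.KMD ∨ ck j o = Tm.KM) :
    ∀ M : Tm, M.keyFree → Good ck (M.subst σ) := by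
  intro M
  induction M with
  | KMD => intro h; exact h.elim
  | KM => intro h; exact h.elim
  | Kq => intro h; exact h.elim
  | var x =>
      intro _
      obtain ⟨j, o, hx⟩ := hσ x
      simp only [Tm.subst, hx, Good]
      exact Or.inr ⟨j, o, rfl, rfl, hck j o⟩
  | user n => intro _; trivial
  | opc n => intro _; trivial
  | name n => intro _; trivial
  | pair a b iha ihb =>
      intro h; exact ⟨iha h.1, ihb h.2⟩
  | mac a b iha ihb =>
      intro h; exact Or.inl ⟨iha h.1, ihb h.2⟩

lemma good_eta3_ne_Kq (ck : ℕ → ℕ → Tm) (M : Tm) (h : Good ck M) :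
    M.eta3 ≠ Tm.Kq := by
  cases M <;> simp [Tm.eta3, Good] at * <;> trivial

lemma good_eta3_inj (ck : ℕ → ℕ → Tm) :
    ∀ M N : Tm, Good ck M → Good ck N → M.eta3 = N.eta3 → M = N := by
  intro M
  induction M with
  | KMD => intro N h; exact h.elim
  | KM => intro N h; exact h.elim
  | Kq => intro N h; exact h.elim
  | var x =>
      intro N _ hN he
      cases N <;> simp_all [Tm.eta3, Good]
  | user n =>
      intro N _ hN he
      cases N <;> simp_all [Tm.eta3, Good]
  | opc n =>
      intro N _ hN he
      cases N <;> simp_all [Tm.eta3, Good]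
  | name n =>
      intro N _ hN he
      cases N <;> simp_all [Tm.eta3, Good]
  | pair a b iha ihb =>
      intro N hM hN he
      cases N with
      | pair c d =>
          simp only [Tm.eta3, Tm.pair.injEq] at he
          exact congrArg₂ Tm.pair (iha _ hM.1 hN.1 he.1) (ihb _ hM.2 hN.2 he.2)
      | KMD => exact hN.elim
      | KM => exact hN.elim
      | Kq => exact hN.elim
      | var x => simp [Tm.eta3] at he
      | user n => simp [Tm.eta3] at he
      | opc n => simp [Tm.eta3] at he
      | name n => simp [Tm.eta3] at he
      | mac c d => simp [Tm.eta3] at he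
  | mac a b iha ihb =>
      intro N hM hN he
      cases N with
      | mac c d =>
          simp only [Tm.eta3, Tm.mac.injEq] at he
          obtain ⟨he1, he2⟩ := he
          rcases hM with ⟨hMa, hMb⟩ | ⟨j, o, ha, hb, hbk⟩ <;>
            rcases hN with ⟨hNc, hNd⟩ | ⟨j', o', hc, hd, hdk⟩
          · exact congrArg₂ Tm.mac (iha _ hMa hNc he1) (ihb _ hMb hNd he2)
          · exfalso
            apply good_eta3_ne_Kq ck b hMb
            rcases hdk with h | h <;> subst hd <;> rw [he2, h] <;> rfl
          · exfalso
            apply good_eta3_ne_Kq ck d hNd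
            rcases hbk with h | h <;> subst hb <;> rw [← he2, h] <;> rfl
          · subst ha hc
            have hac : (j, o) = (j', o') := by
              simp [Tm.eta3] at he1; exact Prod.ext he1.1 he1.2
            simp at hac
            subst hb hd
            rw [hac.1, hac.2]
      | KMD => exact hN.elim
      | KM => exact hN.elim
      | Kq => exact hN.elim
      | var x => simp [Tm.eta3] at he
      | user n => simp [Tm.eta3] at he
      | opc n => simp [Tm.eta3] at he
      | name n => simp [Tm.eta3] at he
      | pair c d => simp [Tm.eta3] at he

/-- Term abstraction preserves equational equality for exportable terms:
η₃ is injective on Export terms. -/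
theorem eta3_injective_on_export {Policy : Type*}
    (certkey : Policy → ℕ → ℕ → Tm) (dishonest : ℕ → Prop) (F : Policy)
    (hkey : ∀ j o, certkey F j o = Tm.KMD ∨ certkey F j o = Tm.KM)
    (M N : Tm)
    (hM : ExportTm certkey dishonest F M) (hN : ExportTm certkey dishonest F N) :
    M = N ↔ M.eta3 = N.eta3 := by
  constructor
  · intro h; rw [h]
  · intro h
    obtain ⟨M', σ, hkf, hσ, rfl⟩ := hM
    obtain ⟨N', τ, hkf', hτ, rfl⟩ := hN
    have hσ' : ∀ x, ∃ j o, σ x = Tm.mac (Tm.pair (Tm.user j) (Tm.opc o)) (certkey F j o) := by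
      intro x; obtain ⟨j, o, _, hx⟩ := hσ x; exact ⟨j, o, hx⟩
    have hτ' : ∀ x, ∃ j o, τ x = Tm.mac (Tm.pair (Tm.user j) (Tm.opc o)) (certkey F j o) := by
      intro x; obtain ⟨j, o, _, hx⟩ := hτ x; exact ⟨j, o, hx⟩
    exact good_eta3_inj (certkey F) _ _
      (good_of_keyFree_subst _ _ hσ' (hkey) _ hkf)
      (good_of_keyFree_subst _ _ hτ' (hkey) _ hkf') h
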